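/- Let α ∈ (1/2,1], T > 0, n ≥ 1, t_k = kT/n, η(s) = t_k for t_k ≤ s < t_{k+1}. Define the scheme Malliavin derivative by the recursion D_s X̌_{t_k} = κ_2 ∫_0^{t_k} D_s X̌_{η(u)} ((t_k−u)^{α−1}/Γ(α)) du + σ (t_k−s)^{α−1}/Γ(α) for s ∈ (0,t_k), with D_s X̌_{t_0} = 0. Then there exists C (independent of n, k) such that ∫_0^{t_k} |D_s X̌_{t_k}| ds ≤ C for all 1 ≤ k ≤ n. -/

import Mathlib

open MeasureTheory

lemma aux_II {α : ℝ} (hα : -1 < α - 1) (r p q : ℝ) :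
    IntervalIntegrable (fun u => (r - u) ^ (α - 1)) volume p q := by
  have := (intervalIntegral.intervalIntegrable_rpow' (a := r - p) (b := r - q) hα).comp_sub_left r
  simpa using this

lemma aux_int {α : ℝ} (hα : -1 < α - 1) (r p q : ℝ) :
    ∫ u in p..q, (r - u) ^ (α - 1) = ((r - p) ^ α - (r - q) ^ α) / α := by
  rw [intervalIntegral.integral_comp_sub_left (fun v => v ^ (α - 1)) r,
    integral_rpow (Or.inl hα)]
  rw [sub_add_cancel]

lemma aux_intOn_congr {f g : ℝ → ℝ} {a b : ℝ} (h : ∀ x ∈ Set.Ioo a b, f x = g x)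
    (hg : IntegrableOn g (Set.Ioc a b)) : IntegrableOn f (Set.Ioc a b) := by
  rw [IntegrableOn, ← Measure.restrict_congr_set Ioo_ae_eq_Ioc]
  rw [IntegrableOn, ← Measure.restrict_congr_set Ioo_ae_eq_Ioc] at hg
  exact hg.congr ((ae_restrict_mem measurableSet_Ioo).mono fun x hx => (h x hx).symm)

lemma aux_setInt_congr {f g : ℝ → ℝ} {a b : ℝ} (h : ∀ x ∈ Set.Ioo a b, f x = g x) :
    ∫ x in Set.Ioc a b, f x = ∫ x in Set.Ioc a b, g x := by
  rw [← Measure.restrict_congr_set Ioo_ae_eq_Ioc]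
  exact setIntegral_congr_fun measurableSet_Ioo h

set_option maxHeartbeats 2000000

/-- Uniform `L¹` bound for the Malliavin derivative of the scheme: with `t_k = kT/n`,
`η(u) = t_{⌊un/T⌋}`, if `D k s` (standing for `D_s X̌_{t_k}`) vanishes for `s ≥ t_k`, vanishes for
`k = 0`, and satisfies the recursion
`D k s = κ₂ ∫_0^{t_k} D_{⌊un/T⌋} s ((t_k-u)^(α-1)/Γ(α)) du + σ (t_k-s)^(α-1)/Γ(α)` for
`s ∈ (0, t_k)`, then `∫_0^{t_k} |D k s| ds ≤ C` with `C` independent of `n` and `k`. -/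
theorem stmt_19 (α κ₂ σ T : ℝ) (hα : 1 / 2 < α) (hα1 : α ≤ 1) (hT : 0 < T) :
    ∃ C : ℝ, ∀ n : ℕ, 1 ≤ n → ∀ D : ℕ → ℝ → ℝ,
      (∀ s : ℝ, D 0 s = 0) →
      (∀ k : ℕ, ∀ s : ℝ, (k : ℝ) * T / n ≤ s → D k s = 0) →
      (∀ k : ℕ, 1 ≤ k → k ≤ n → ∀ s : ℝ, 0 < s → s < (k : ℝ) * T / n →
        D k s = κ₂ * (∫ u in (0 : ℝ)..((k : ℝ) * T / n),
              D (⌊u * n / T⌋₊) s * (((k : ℝ) * T / n - u) ^ (α - 1) / Real.Gamma α))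
          + σ * (((k : ℝ) * T / n - s) ^ (α - 1) / Real.Gamma α)) →
      ∀ k : ℕ, 1 ≤ k → k ≤ n →
        (∫ s in (0 : ℝ)..((k : ℝ) * T / n), |D k s|) ≤ C := by
  have hα0 : 0 < α := by linarith
  have hαm : -1 < α - 1 := by linarith
  have hΓ : 0 < Real.Gamma α := Real.Gamma_pos_of_pos hα0
  set Γα := Real.Gamma α with hΓα
  set K := |κ₂| with hKdef
  have hK0 : 0 ≤ K := abs_nonneg _
  set G := T ^ α / (α * Γα) with hGdef
  have hG0 : 0 ≤ G := by positivity
  set A := |σ| * (T ^ α / (α * Γα)) with hAdef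
  have hA0 : 0 ≤ A := by positivity
  set δ := ((α * Γα) / (2 * (K + 1))) ^ (1/α) with hδdef
  have hδ0 : 0 < δ := Real.rpow_pos_of_pos (by positivity) _
  have hδα : δ ^ α = (α * Γα) / (2 * (K + 1)) := by
    rw [hδdef, ← Real.rpow_mul (by positivity), one_div, inv_mul_cancel₀ (ne_of_gt hα0),
      Real.rpow_one]
  have hKδ : K * (δ ^ α / (α * Γα)) ≤ 1/2 := by
    have h1 : K * (α * Γα / (2 * (K + 1)) / (α * Γα)) = K / (2*(K+1)) := by
      field_simp
    rw [hδα, h1, div_le_div_iff₀ (by positivity) (by norm_num : (0:ℝ) < 2)]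
    linarith
  set N := ⌈T / δ⌉₊ with hNdef
  set M : ℕ → ℝ := fun j => 2*A * ∑ i ∈ Finset.range j, (2*K*G)^i with hMdef
  have hM0 : ∀ j, 0 ≤ M j := by
    intro j
    apply mul_nonneg (by linarith)
    exact Finset.sum_nonneg fun i _ => pow_nonneg (by positivity) i
  have hMsucc : ∀ j, M (j+1) = 2*A + 2*K*G * M j := by
    intro j
    simp only [hMdef, Finset.sum_range_succ', pow_zero]
    have : ∀ i, (2*K*G)^(i+1) = (2*K*G) * (2*K*G)^i := fun i => pow_succ' _ _
    simp only [this, ← Finset.mul_sum]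
    ring
  have hMmono : ∀ j, M j ≤ M (j+1) := by
    intro j
    induction j with
    | zero =>
      simp only [hMdef, Finset.range_zero, Finset.sum_empty, mul_zero, Finset.range_one,
        Finset.sum_singleton, pow_zero, mul_one]
      positivity
    | succ j ih =>
      rw [hMsucc, hMsucc]
      have : 0 ≤ 2*K*G := by positivity
      nlinarith
  refine ⟨M N, ?_⟩
  intro n hn D hD0 hDz hrec
  have hn0 : (0:ℝ) < n := by exact_mod_cast hn
  set t : ℕ → ℝ := fun k => (k:ℝ) * T / n with htdef
  have ht0 : t 0 = 0 := by simp [htdef]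
  have htmono : ∀ {i j : ℕ}, i ≤ j → t i ≤ t j := by
    intro i j hij
    simp only [htdef]
    have hij' : (i:ℝ) ≤ j := by exact_mod_cast hij
    gcongr
  have htnn : ∀ i, 0 ≤ t i := fun i => ht0 ▸ htmono (Nat.zero_le i)
  have htsub : ∀ i j : ℕ, t j - t i = ((j:ℝ) - i) * T / n := by
    intro i j; simp only [htdef]; ring
  have htpos : ∀ i : ℕ, 1 ≤ i → 0 < t i := by
    intro i hi
    simp only [htdef]
    have h1 : (1:ℝ) ≤ i := by exact_mod_cast hi
    apply div_pos (by nlinarith) hn0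
  have htle : ∀ k : ℕ, k ≤ n → t k ≤ T := by
    intro k hk
    simp only [htdef]
    rw [div_le_iff₀ hn0]
    have : (k:ℝ) ≤ n := by exact_mod_cast hk
    nlinarith
  have hzα : (0:ℝ) ^ α = 0 := Real.zero_rpow (ne_of_gt hα0)
  set c : ℕ → ℕ → ℝ :=
    fun i k => ((t k - t i) ^ α - (t k - t (i+1)) ^ α) / (α * Γα) with hcdef
  have hcint : ∀ i k : ℕ,
      ∫ u in t i..t (i+1), (t k - u) ^ (α - 1) / Γα = c i k := by
    intro i k
    rw [intervalIntegral.integral_div, aux_int hαm, hcdef, div_div]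
  have hcnn : ∀ i k : ℕ, i < k → 0 ≤ c i k := by
    intro i k hik
    apply div_nonneg ?_ (by positivity)
    have h1 : t (i+1) ≤ t k := htmono hik
    have h2 : t i ≤ t (i+1) := htmono (Nat.le_succ i)
    have := Real.rpow_le_rpow (by linarith : (0:ℝ) ≤ t k - t (i+1))
      (by linarith : t k - t (i+1) ≤ t k - t i) (le_of_lt hα0)
    linarith
  have hsumc : ∀ a b k : ℕ, a ≤ b → ∑ i ∈ Finset.Ico a b, c i k =
      ((t k - t a) ^ α - (t k - t b) ^ α) / (α * Γα) := by
    intro a b k hab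
    induction b, hab using Nat.le_induction with
    | base => simp
    | succ b hab ih =>
      rw [Finset.sum_Ico_succ_top hab, ih, hcdef]
      ring
  -- integrability of the kernel on Ioc intervals
  have hwint : ∀ p q r : ℝ, IntegrableOn (fun u => (r - u) ^ (α - 1) / Γα)
      (Set.Ioc p q) volume := by
    intro p q r
    rcases le_or_gt p q with hpq | hpq
    · have := (aux_II hαm r p q).div_const Γα
      exact (intervalIntegrable_iff_integrableOn_Ioc_of_le hpq).mp this
    · rw [Set.Ioc_eq_empty (not_lt.mpr hpq.le)]
      exact integrableOn_empty
  -- floor identification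
  have hfloor : ∀ (i : ℕ) (u : ℝ), t i ≤ u → u < t (i+1) → ⌊u * n / T⌋₊ = i := by
    intro i u h1 h2
    have h1' : (i:ℝ) * T ≤ u * n := by
      have := h1
      simp only [htdef] at this
      rw [div_le_iff₀ hn0] at this
      linarith
    have h2' : u * n < ((i:ℝ) + 1) * T := by
      have := h2
      simp only [htdef] at this
      rw [lt_div_iff₀ hn0] at this
      push_cast at this
      linarith
    have hl : (i:ℝ) ≤ u * n / T := by
      rw [le_div_iff₀ hT]; linarith
    have hu : u * n / T < (i:ℝ) + 1 := by
      rw [div_lt_iff₀ hT]; linarith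
    rw [Nat.floor_eq_iff (le_trans (Nat.cast_nonneg i) hl)]
    exact ⟨hl, by exact_mod_cast hu⟩
  set If : ℕ → ℝ := fun i => ∫ s in Set.Ioc 0 (t i), |D i s| with hIfdef
  have hIfnn : ∀ i, 0 ≤ If i := fun i =>
    setIntegral_nonneg measurableSet_Ioc fun s _ => abs_nonneg _
  have hIext : ∀ i k : ℕ, i ≤ k → IntegrableOn (D i) (Set.Ioc 0 (t i)) volume →
      IntegrableOn (D i) (Set.Ioc 0 (t k)) volume := by
    intro i k hik hint
    have hsplit : Set.Ioc 0 (t k) = Set.Ioc 0 (t i) ∪ Set.Ioc (t i) (t k) :=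
      (Set.Ioc_union_Ioc_eq_Ioc (htnn i) (htmono hik)).symm
    rw [hsplit]
    apply hint.union
    have heq : Set.EqOn (D i) (fun _ => (0:ℝ)) (Set.Ioc (t i) (t k)) := fun s hs =>
      hDz i s hs.1.le
    exact (integrableOn_congr_fun heq measurableSet_Ioc).mpr (integrable_zero _ _ _)
  have hIfext : ∀ i k : ℕ, i ≤ k → IntegrableOn (D i) (Set.Ioc 0 (t i)) volume →
      ∫ s in Set.Ioc 0 (t k), |D i s| = If i := by
    intro i k hik hint
    have hsplit : Set.Ioc 0 (t k) = Set.Ioc 0 (t i) ∪ Set.Ioc (t i) (t k) :=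
      (Set.Ioc_union_Ioc_eq_Ioc (htnn i) (htmono hik)).symm
    have hz : ∫ s in Set.Ioc (t i) (t k), |D i s| = 0 := by
      rw [setIntegral_congr_fun measurableSet_Ioc
        (fun s hs => by show |D i s| = 0; rw [hDz i s hs.1.le, abs_zero] : Set.EqOn (fun s => |D i s|)
          (fun _ => (0:ℝ)) (Set.Ioc (t i) (t k)))]
      simp
    have hdisj : Disjoint (Set.Ioc 0 (t i)) (Set.Ioc (t i) (t k)) := by
      apply Set.disjoint_left.mpr
      intro s hs1 hs2
      exact absurd hs2.1 (not_lt.mpr hs1.2)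
    have heqz : Set.EqOn (D i) (fun _ => (0:ℝ)) (Set.Ioc (t i) (t k)) := fun s hs =>
      hDz i s hs.1.le
    rw [hsplit, setIntegral_union hdisj measurableSet_Ioc hint.abs
      (((integrableOn_congr_fun heqz measurableSet_Ioc).mpr (integrable_zero _ _ _)).abs),
      hz, add_zero, hIfdef]
  -- the key recursion estimate
  have key : ∀ k : ℕ, 1 ≤ k → k ≤ n →
      (∀ i, i < k → IntegrableOn (D i) (Set.Ioc 0 (t i)) volume) →
      IntegrableOn (D k) (Set.Ioc 0 (t k)) volume ∧
      If k ≤ A + K * ∑ i ∈ Finset.range k, c i k * If i := by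
    intro k hk1 hkn IH
    set F : ℝ → ℝ := fun s => κ₂ * (∑ i ∈ Finset.range k, D i s * c i k)
      + σ * ((t k - s) ^ (α - 1) / Γα) with hFdef
    have hDiInt : ∀ i, i < k → IntegrableOn (D i) (Set.Ioc 0 (t k)) volume := fun i hi =>
      hIext i k hi.le (IH i hi)
    have hFint : IntegrableOn F (Set.Ioc 0 (t k)) volume := by
      apply Integrable.add
      · exact (integrable_finset_sum _ fun i hi =>
          (hDiInt i (Finset.mem_range.mp hi)).mul_const _).const_mul κ₂
      · exact (hwint 0 (t k) (t k)).const_mul σ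
    have hDF : ∀ s ∈ Set.Ioo 0 (t k), D k s = F s := by
      intro s hs
      rw [hrec k hk1 hkn s hs.1 hs.2, hFdef]
      have hpieceInt : ∀ i, i < k → IntervalIntegrable
          (fun u => D (⌊u * n / T⌋₊) s * ((t k - u) ^ (α - 1) / Γα))
          volume (t i) (t (i+1)) := by
        intro i hi
        rw [intervalIntegrable_iff_integrableOn_Ioc_of_le (htmono (Nat.le_succ i))]
        apply aux_intOn_congr (g := fun u => D i s * ((t k - u) ^ (α - 1) / Γα))
        · intro u hu
          rw [hfloor i u hu.1.le hu.2]
        · exact (hwint (t i) (t (i+1)) (t k)).const_mul _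
      have hadj := intervalIntegral.sum_integral_adjacent_intervals
        (f := fun u => D (⌊u * n / T⌋₊) s * ((t k - u) ^ (α - 1) / Γα)) hpieceInt
      rw [ht0] at hadj
      have hpieceval : ∀ i ∈ Finset.range k,
          (∫ u in t i..t (i+1), D (⌊u * n / T⌋₊) s * ((t k - u) ^ (α - 1) / Γα))
          = D i s * c i k := by
        intro i hi
        rw [intervalIntegral.integral_of_le (htmono (Nat.le_succ i)),
          aux_setInt_congr (g := fun u => D i s * ((t k - u) ^ (α - 1) / Γα))
            (fun u hu => by rw [hfloor i u hu.1.le hu.2]),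
          ← intervalIntegral.integral_of_le (htmono (Nat.le_succ i)),
          intervalIntegral.integral_const_mul, hcint]
      rw [← hadj, Finset.sum_congr rfl hpieceval]
    have hDkInt : IntegrableOn (D k) (Set.Ioc 0 (t k)) volume :=
      aux_intOn_congr hDF hFint
    refine ⟨hDkInt, ?_⟩
    have hIfk : If k = ∫ s in Set.Ioc 0 (t k), |F s| := by
      rw [hIfdef]
      exact aux_setInt_congr fun s hs => by rw [hDF s hs]
    set bnd : ℝ → ℝ := fun s => K * (∑ i ∈ Finset.range k, |D i s| * c i k)
      + |σ| * ((t k - s) ^ (α - 1) / Γα) with hbnddef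
    have hsumInt : IntegrableOn (fun s => ∑ i ∈ Finset.range k, |D i s| * c i k)
        (Set.Ioc 0 (t k)) volume :=
      integrable_finset_sum _ fun i hi =>
        ((hDiInt i (Finset.mem_range.mp hi)).abs.mul_const _)
    have hbndInt : IntegrableOn bnd (Set.Ioc 0 (t k)) volume :=
      Integrable.add (hsumInt.const_mul K) ((hwint 0 (t k) (t k)).const_mul _)
    have hpw : ∀ s ∈ Set.Ioc 0 (t k), |F s| ≤ bnd s := by
      intro s hs
      have hw0 : 0 ≤ (t k - s) ^ (α - 1) / Γα :=
        div_nonneg (Real.rpow_nonneg (by linarith [hs.2]) _) hΓ.le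
      have habs : |∑ i ∈ Finset.range k, D i s * c i k|
          ≤ ∑ i ∈ Finset.range k, |D i s| * c i k := by
        calc |∑ i ∈ Finset.range k, D i s * c i k|
            ≤ ∑ i ∈ Finset.range k, |D i s * c i k| := Finset.abs_sum_le_sum_abs _ _
          _ = ∑ i ∈ Finset.range k, |D i s| * c i k := Finset.sum_congr rfl fun i hi => by
              rw [abs_mul, abs_of_nonneg (hcnn i k (Finset.mem_range.mp hi))]
      calc |F s| ≤ |κ₂ * (∑ i ∈ Finset.range k, D i s * c i k)|
            + |σ * ((t k - s) ^ (α - 1) / Γα)| := abs_add_le _ _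
        _ ≤ K * (∑ i ∈ Finset.range k, |D i s| * c i k)
            + |σ| * ((t k - s) ^ (α - 1) / Γα) := by
            rw [abs_mul, abs_mul, abs_of_nonneg hw0, hKdef]
            exact add_le_add (mul_le_mul_of_nonneg_left habs (abs_nonneg κ₂)) le_rfl
        _ = bnd s := rfl
    have hstep1 : If k ≤ ∫ s in Set.Ioc 0 (t k), bnd s := by
      rw [hIfk]
      exact setIntegral_mono_on hFint.abs hbndInt measurableSet_Ioc hpw
    have hbndval : ∫ s in Set.Ioc 0 (t k), bnd s
        = K * ∑ i ∈ Finset.range k, c i k * If i + |σ| * ((t k) ^ α / (α * Γα)) := by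
      rw [hbnddef]
      rw [integral_add (hsumInt.const_mul K) ((hwint 0 (t k) (t k)).const_mul _),
        integral_const_mul, integral_const_mul,
        integral_finset_sum _ (fun i hi => ((hDiInt i (Finset.mem_range.mp hi)).abs.mul_const _))]
      congr 1
      · congr 1
        apply Finset.sum_congr rfl
        intro i hi
        rw [integral_mul_const,
          hIfext i k (Finset.mem_range.mp hi).le (IH i (Finset.mem_range.mp hi))]
        ring
      · rw [← intervalIntegral.integral_of_le (htnn k), intervalIntegral.integral_div,
          aux_int hαm, sub_zero, sub_self, hzα, sub_zero, div_div]
    have hlast : |σ| * ((t k) ^ α / (α * Γα)) ≤ A := by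
      rw [hAdef]
      have h1 : (t k) ^ α ≤ T ^ α := Real.rpow_le_rpow (htnn k) (htle k hkn) hα0.le
      have h2 : (t k) ^ α / (α * Γα) ≤ T ^ α / (α * Γα) := by
        apply div_le_div_of_nonneg_right h1 ?_ |>.trans_eq rfl
        positivity
      exact mul_le_mul_of_nonneg_left h2 (abs_nonneg σ)
    rw [hbndval] at hstep1
    linarith
  have hIntAll : ∀ k : ℕ, k ≤ n → IntegrableOn (D k) (Set.Ioc 0 (t k)) volume := by
    intro k
    induction k using Nat.strong_induction_on with
    | _ k IHk =>
      intro hkn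
      rcases Nat.eq_zero_or_pos k with rfl | hk1
      · rw [ht0, Set.Ioc_self]; exact integrableOn_empty
      · exact (key k hk1 hkn fun i hi => IHk i hi (le_trans hi.le hkn)).1
  have hIb : ∀ k : ℕ, 1 ≤ k → k ≤ n →
      If k ≤ A + K * ∑ i ∈ Finset.range k, c i k * If i := fun k h1 h2 =>
    (key k h1 h2 fun i hi => hIntAll i (le_trans hi.le h2)).2
  have gron : ∀ k : ℕ, k ≤ n → ∀ j : ℕ, t k ≤ j * δ → If k ≤ M j := by
    intro k
    induction k using Nat.strong_induction_on with
    | _ k IHk =>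
      intro hkn j htkj
      rcases Nat.eq_zero_or_pos k with rfl | hk1
      · have hIf0 : If 0 = 0 := by
          rw [hIfdef]; simp only [ht0, Set.Ioc_self, Measure.restrict_empty,
            integral_zero_measure]
        rw [hIf0]; exact hM0 j
      obtain ⟨j', rfl⟩ : ∃ j', j = j' + 1 := by
        cases j with
        | zero =>
          exfalso
          have h1 := htpos k hk1
          simp only [Nat.cast_zero, zero_mul] at htkj
          linarith
        | succ j' => exact ⟨j', rfl⟩
      set m := min k ⌊δ * (n : ℝ) / T⌋₊ with hmdef
      set a := k - m with hadef
      have ham : m ≤ k := min_le_left _ _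
      have hak : a ≤ k := Nat.sub_le _ _
      have hsplit : ∑ i ∈ Finset.range k, c i k * If i
          = ∑ i ∈ Finset.Ico 0 a, c i k * If i + ∑ i ∈ Finset.Ico a k, c i k * If i := by
        rw [Finset.range_eq_Ico, ← Finset.sum_Ico_consecutive _ (Nat.zero_le a) hak]
      have htka : t k - t a ≤ δ := by
        rw [htsub]
        have h1 : (k:ℝ) - a = m := by
          have h2 : a + m = k := Nat.sub_add_cancel ham
          have h3 : ((a:ℝ) + m) = k := by exact_mod_cast congrArg (Nat.cast (R := ℝ)) h2
          linarith
        rw [h1]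
        have h2 : (m:ℝ) ≤ δ * n / T := by
          calc (m:ℝ) ≤ (⌊δ * (n:ℝ) / T⌋₊ : ℝ) := by exact_mod_cast (min_le_right k _)
            _ ≤ δ * n / T := Nat.floor_le (by positivity)
        rw [div_le_iff₀ hn0]
        have h3 := (le_div_iff₀ hT).mp h2
        linarith
      have hrecentc : ∑ i ∈ Finset.Ico a k, c i k ≤ δ ^ α / (α * Γα) := by
        rw [hsumc a k k hak, sub_self, hzα, sub_zero]
        have h1 : (t k - t a) ^ α ≤ δ ^ α :=
          Real.rpow_le_rpow (by linarith [htmono hak]) htka hα0.le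
        apply div_le_div_of_nonneg_right h1 ?_ |>.trans_eq rfl
        positivity
      have hrecent : ∑ i ∈ Finset.Ico a k, c i k * If i
          ≤ (δ ^ α / (α * Γα)) * M (j'+1) := by
        calc ∑ i ∈ Finset.Ico a k, c i k * If i
            ≤ ∑ i ∈ Finset.Ico a k, c i k * M (j'+1) := by
              apply Finset.sum_le_sum
              intro i hi
              have hik : i < k := (Finset.mem_Ico.mp hi).2
              exact mul_le_mul_of_nonneg_left
                (IHk i hik (le_trans hik.le hkn) (j'+1) (le_trans (htmono hik.le) htkj))
                (hcnn i k hik)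
          _ = (∑ i ∈ Finset.Ico a k, c i k) * M (j'+1) := (Finset.sum_mul _ _ _).symm
          _ ≤ (δ ^ α / (α * Γα)) * M (j'+1) :=
              mul_le_mul_of_nonneg_right hrecentc (hM0 _)
      have holdb : ∀ i ∈ Finset.Ico 0 a, If i ≤ M j' := by
        intro i hi
        have hia : i < a := (Finset.mem_Ico.mp hi).2
        have hik : i < k := lt_of_lt_of_le hia hak
        apply IHk i hik (le_trans hik.le hkn) j'
        -- show t i ≤ j' * δ
        have hma : m = ⌊δ * (n:ℝ) / T⌋₊ := by omega
        have h2 : δ * (n:ℝ) / T < (m:ℝ) + 1 := by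
          rw [hma]
          exact_mod_cast Nat.lt_succ_floor (δ * (n:ℝ) / T)
        have h3 : δ < ((m:ℝ) + 1) * T / n := by
          rw [lt_div_iff₀ hn0]
          have h4 := (div_lt_iff₀ hT).mp h2
          linarith
        have h5 : (m:ℝ) + 1 ≤ (k:ℝ) - i := by
          have h6 : i + (m + 1) ≤ k := by omega
          have h7 : ((i:ℝ) + (m + 1)) ≤ k := by exact_mod_cast h6
          push_cast at h7 ⊢
          linarith
        have h8 : t k - t i ≥ ((m:ℝ) + 1) * T / n := by
          rw [htsub]
          have hTn : 0 < T / n := div_pos hT hn0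
          calc ((m:ℝ) + 1) * T / n = ((m:ℝ) + 1) * (T / n) := by ring
            _ ≤ ((k:ℝ) - i) * (T / n) := mul_le_mul_of_nonneg_right h5 hTn.le
            _ = ((k:ℝ) - i) * T / n := by ring
        have h9 : t i ≤ t k - δ := by linarith
        have h10 : (((j':ℕ) + 1 : ℕ) : ℝ) * δ = (j':ℝ) * δ + δ := by push_cast; ring
        rw [h10] at htkj
        linarith
      have hold : ∑ i ∈ Finset.Ico 0 a, c i k * If i ≤ G * M j' := by
        have hsa : ∑ i ∈ Finset.Ico 0 a, c i k ≤ G := by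
          rw [hsumc 0 a k (Nat.zero_le a), ht0, sub_zero, hGdef]
          have h1 : 0 ≤ (t k - t a) ^ α := Real.rpow_nonneg (by linarith [htmono hak]) _
          have h2 : (t k) ^ α ≤ T ^ α := Real.rpow_le_rpow (htnn k) (htle k hkn) hα0.le
          apply div_le_div_of_nonneg_right (by linarith) ?_ |>.trans_eq rfl
          positivity
        calc ∑ i ∈ Finset.Ico 0 a, c i k * If i
            ≤ ∑ i ∈ Finset.Ico 0 a, c i k * M j' := by
              apply Finset.sum_le_sum
              intro i hi
              exact mul_le_mul_of_nonneg_left (holdb i hi)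
                (hcnn i k (lt_of_lt_of_le (Finset.mem_Ico.mp hi).2 hak))
          _ = (∑ i ∈ Finset.Ico 0 a, c i k) * M j' := (Finset.sum_mul _ _ _).symm
          _ ≤ G * M j' := mul_le_mul_of_nonneg_right hsa (hM0 _)
      have hIk := hIb k hk1 hkn
      rw [hsplit] at hIk
      have hKhalf : K * ((δ ^ α / (α * Γα)) * M (j'+1)) ≤ (1/2) * M (j'+1) := by
        rw [← mul_assoc]
        exact mul_le_mul_of_nonneg_right hKδ (hM0 _)
      have hcomb : If k ≤ A + K * (G * M j') + (1/2) * M (j'+1) := by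
        have h1 : K * (∑ i ∈ Finset.Ico 0 a, c i k * If i
            + ∑ i ∈ Finset.Ico a k, c i k * If i)
            ≤ K * (G * M j') + K * ((δ ^ α / (α * Γα)) * M (j'+1)) := by
          calc K * (∑ i ∈ Finset.Ico 0 a, c i k * If i
                + ∑ i ∈ Finset.Ico a k, c i k * If i)
              ≤ K * (G * M j' + (δ ^ α / (α * Γα)) * M (j'+1)) :=
                mul_le_mul_of_nonneg_left (add_le_add hold hrecent) hK0
            _ = K * (G * M j') + K * ((δ ^ α / (α * Γα)) * M (j'+1)) := mul_add _ _ _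
        linarith
      have hfin : A + K * (G * M j') + (1/2) * M (j'+1) = M (j'+1) := by
        rw [hMsucc j']
        ring
      linarith
  -- conclusion
  intro k hk1 hkn
  rw [intervalIntegral.integral_of_le (htnn k)]
  apply gron k hkn N
  calc t k ≤ T := htle k hkn
    _ ≤ (N:ℝ) * δ := by
      rw [hNdef]
      have h1 : T / δ ≤ (⌈T / δ⌉₊ : ℝ) := Nat.le_ceil _
      rw [← div_le_iff₀ hδ0]
      exact h1
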